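/- arXiv:2110.10277 — 4 statements merged into one kernel-verified Lean document; each statement's English description precedes it below -/
import Mathlib

section
/- Let X : Ω → 𝒳 and η : Ω → ℝ^m be independent random elements on a probability space, let G : ℝ^m × 𝒳 → ℝ be measurable, and let Y : Ω → ℝ be integrable. Assume the joint law of (X, G(η, X)) equals the joint law of (X, Y). Define g(x) = ∫_{ℝ^m} G(e, x) dP_η(e), where P_η is the law of η. Then E[Y | X] = g(X) almost surely. If moreover Y is square-integrable, then for P_X-almost every x (where P_X is the law of X) the conditional variance satisfies Var(Y | X = x) = ∫_{ℝ^m} (G(e, x) − g(x))² dP_η(e). -/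
open MeasureTheory ProbabilityTheory

/-- If the joint law of `(X, G(η, X))` equals that of `(X, Y)` with `η` independent of `X`
and `Y` integrable, then `E[Y | X] = g(X)` a.s., where `g(x) = ∫ G(e, x) dP_η(e)`; and if
`Y` is square-integrable, then for `P_X`-a.e. `x` the conditional variance of `Y` given
`X = x` equals `∫ (G(e, x) − g(x))² dP_η(e)`. -/
theorem conditional_mean_and_variance_from_generator
    {Ω 𝒳 : Type} [MeasurableSpace Ω] [m𝒳 : MeasurableSpace 𝒳]
    (P : Measure Ω) [IsProbabilityMeasure P] {m : ℕ}
    (X : Ω → 𝒳) (η : Ω → (Fin m → ℝ)) (Y : Ω → ℝ)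
    (hX : Measurable X) (hη : Measurable η) (hY : Measurable Y)
    (hind : IndepFun X η P)
    (G : (Fin m → ℝ) × 𝒳 → ℝ) (hG : Measurable G)
    (hYint : Integrable Y P)
    (hlaw : P.map (fun ω => (X ω, G (η ω, X ω))) = P.map (fun ω => (X ω, Y ω)))
    (g : 𝒳 → ℝ) (hg : ∀ x, g x = ∫ e, G (e, x) ∂(P.map η)) :
    (P[Y | m𝒳.comap X] =ᵐ[P] fun ω => g (X ω)) ∧
    (MemLp Y 2 P → ∀ᵐ x ∂(P.map X),
      variance id (condDistrib Y X P x) = ∫ e, (G (e, x) - g x) ^ 2 ∂(P.map η)) := by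
  set ν : Measure (Fin m → ℝ) := P.map η with hν
  haveI hνprob : IsProbabilityMeasure ν := Measure.isProbabilityMeasure_map hη.aemeasurable
  have hGx : ∀ x : 𝒳, Measurable (fun e => G (e, x)) :=
    fun x => hG.comp (measurable_id.prodMk measurable_const)
  set κ : Kernel 𝒳 ℝ := Kernel.map ((Kernel.const 𝒳 ν) ×ₖ Kernel.id) G with hκdef
  haveI : IsMarkovKernel κ := Kernel.IsMarkovKernel.map _ hG
  have hκ_apply : ∀ x, κ x = ν.map (fun e => G (e, x)) := by
    intro x
    rw [hκdef, Kernel.map_apply _ hG, Kernel.prod_apply, Kernel.const_apply, Kernel.id_apply,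
      Measure.prod_dirac, Measure.map_map hG measurable_prodMk_right]
    rfl
  have hXη : P.map (fun ω => (X ω, η ω)) = (P.map X).prod ν :=
    (indepFun_iff_map_prod_eq_prod_map_map hX.aemeasurable hη.aemeasurable).mp hind
  have hcomp : P.map (fun ω => (X ω, Y ω)) = (P.map X) ⊗ₘ κ := by
    rw [← hlaw]
    have hfm : Measurable (fun p : 𝒳 × (Fin m → ℝ) => (p.1, G (p.2, p.1))) :=
      measurable_fst.prodMk (hG.comp (measurable_snd.prodMk measurable_fst))
    have h1 : P.map (fun ω => (X ω, G (η ω, X ω))) =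
        ((P.map X).prod ν).map (fun p : 𝒳 × (Fin m → ℝ) => (p.1, G (p.2, p.1))) := by
      rw [← hXη, Measure.map_map hfm (hX.prodMk hη)]
      rfl
    rw [h1]
    ext s hs
    rw [Measure.map_apply hfm hs, Measure.compProd_apply hs,
      Measure.prod_apply (hfm hs)]
    refine lintegral_congr fun x => ?_
    rw [hκ_apply, Measure.map_apply (hGx x) (measurable_prodMk_left hs)]
    rfl
  have hcd : ∀ᵐ x ∂P.map X, κ x = condDistrib Y X P x :=
    (condDistrib_ae_eq_of_measure_eq_compProd X hY.aemeasurable hcomp).mono fun x hx => hx.symm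
  have hmean : ∀ x, ∫ y, y ∂(κ x) = g x := by
    intro x
    rw [hκ_apply,
      integral_map (f := fun y : ℝ => y) (hGx x).aemeasurable aestronglyMeasurable_id]
    exact (hg x).symm
  constructor
  · have h1 := condExp_ae_eq_integral_condDistrib' hX hYint
    refine h1.trans ?_
    have h2 : ∀ᵐ ω ∂P, κ (X ω) = condDistrib Y X P (X ω) :=
      ae_of_ae_map hX.aemeasurable hcd
    filter_upwards [h2] with ω hω
    rw [← hω, hmean]
  · intro hY2
    -- MemLp of the generator on the product measure
    have hGm : Measurable (fun p : 𝒳 × (Fin m → ℝ) => G (p.2, p.1)) :=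
      hG.comp (measurable_snd.prodMk measurable_fst)
    have hmemG : MemLp (fun ω => G (η ω, X ω)) 2 P := by
      have h3 : MemLp (fun p : 𝒳 × ℝ => p.2) 2 (P.map (fun ω => (X ω, Y ω))) :=
        (memLp_map_measure_iff measurable_snd.aestronglyMeasurable
          (hX.prodMk hY).aemeasurable).mpr hY2
      rw [← hlaw] at h3
      exact (memLp_map_measure_iff measurable_snd.aestronglyMeasurable
        (hX.prodMk (hG.comp (hη.prodMk hX))).aemeasurable).mp h3
    have hmem : MemLp (fun p : 𝒳 × (Fin m → ℝ) => G (p.2, p.1)) 2 ((P.map X).prod ν) := by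
      rw [← hXη]
      exact (memLp_map_measure_iff hGm.aestronglyMeasurable
        (hX.prodMk hη).aemeasurable).mpr hmemG
    have hsq : Integrable (fun p : 𝒳 × (Fin m → ℝ) => G (p.2, p.1) ^ 2) ((P.map X).prod ν) :=
      (memLp_two_iff_integrable_sq hGm.aestronglyMeasurable).mp hmem
    have hae : ∀ᵐ x ∂P.map X, MemLp (fun e => G (e, x)) 2 ν := by
      filter_upwards [hsq.prod_right_ae] with x hx
      exact (memLp_two_iff_integrable_sq (hGx x).aestronglyMeasurable).mpr hx
    filter_upwards [hcd, hae] with x hx hmemx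
    rw [← hx, hκ_apply]
    haveI : IsProbabilityMeasure (ν.map (fun e => G (e, x))) :=
      Measure.isProbabilityMeasure_map (hGx x).aemeasurable
    have hid : MemLp (id : ℝ → ℝ) 2 (ν.map (fun e => G (e, x))) :=
      (memLp_map_measure_iff aestronglyMeasurable_id (hGx x).aemeasurable).mpr hmemx
    have hmx : ∫ y, y ∂(ν.map (fun e => G (e, x))) = g x := by
      rw [← hκ_apply x]; exact hmean x
    rw [variance_eq_integral measurable_id.aemeasurable]
    simp only [Pi.pow_apply, Pi.sub_apply, id_eq]
    rw [hmx, integral_map (f := fun y : ℝ => (y - g x) ^ 2) (hGx x).aemeasurable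
      ((measurable_id.sub measurable_const).pow_const 2).aestronglyMeasurable]
end

section
/- Dual form of the Kullback–Leibler divergence: Let μ be a σ-finite measure on a measurable space Z and let p, q be probability densities with respect to μ such that the density ratio r = q/p satisfies 0 < C₁ ≤ r(z) ≤ C₂ < ∞ for μ-a.e. z, for some constants C₁, C₂. Then D_KL(q‖p) = sup_D { ∫ D q dμ − ∫ e^{D} p dμ } + 1, where the supremum is taken over all bounded measurable functions D : Z → ℝ, and the supremum is attained at D = log r. -/
open MeasureTheory

private lemma fenchel_pt (a b t : ℝ) (ha : 0 < a) (hb : 0 < b) :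
    t * a - Real.exp t * b ≤ a * Real.log (a / b) - a := by
  have h := Real.add_one_le_exp (t - Real.log (a / b))
  have he : Real.exp (t - Real.log (a / b)) * a = Real.exp t * b := by
    rw [Real.exp_sub, Real.exp_log (div_pos ha hb)]
    field_simp
  have := mul_le_mul_of_nonneg_right h ha.le
  nlinarith [this, he]

/-- Dual form of the Kullback–Leibler divergence: if the density ratio `r = q/p` satisfies
`0 < C₁ ≤ r ≤ C₂ < ∞` a.e., then
`D_KL(q‖p) = sup_D { ∫ D q dμ − ∫ e^D p dμ } + 1`, the supremum being over all bounded
measurable `D`, and it is attained at `D = log r`. -/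
theorem kl_divergence_dual_form
    {Z : Type} [MeasurableSpace Z] (μ : Measure Z) [SigmaFinite μ]
    (p q : Z → ℝ) (hp : Measurable p) (hq : Measurable q)
    (hp0 : 0 ≤ᵐ[μ] p) (hq0 : 0 ≤ᵐ[μ] q)
    (hpint : ∫ z, p z ∂μ = 1) (hqint : ∫ z, q z ∂μ = 1)
    (C₁ C₂ : ℝ) (hC₁ : 0 < C₁)
    (hr : ∀ᵐ z ∂μ, C₁ ≤ q z / p z ∧ q z / p z ≤ C₂) :
    (∫ z, q z * Real.log (q z / p z) ∂μ =
      sSup {y : ℝ | ∃ D : Z → ℝ, Measurable D ∧ (∃ M : ℝ, ∀ z, |D z| ≤ M) ∧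
        y = ∫ z, D z * q z ∂μ - ∫ z, Real.exp (D z) * p z ∂μ} + 1) ∧
    (∫ z, Real.log (q z / p z) * q z ∂μ - ∫ z, Real.exp (Real.log (q z / p z)) * p z ∂μ
      = ∫ z, q z * Real.log (q z / p z) ∂μ - 1) := by
  have hqInt : Integrable q μ := by
    by_contra h; rw [integral_undef h] at hqint; norm_num at hqint
  have hpInt : Integrable p μ := by
    by_contra h; rw [integral_undef h] at hpint; norm_num at hpint
  -- basic a.e. facts
  have hae : ∀ᵐ z ∂μ, 0 < p z ∧ 0 < q z ∧ C₁ ≤ q z / p z ∧ q z / p z ≤ C₂ := by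
    filter_upwards [hp0, hq0, hr] with z hpz hqz ⟨h1, h2⟩
    have hppos : 0 < p z := by
      rcases hpz.lt_or_eq with h | h
      · exact h
      · exfalso
        have h' : p z = 0 := h.symm
        rw [h', div_zero] at h1; linarith
    have hqpos : 0 < q z := by
      have := (le_div_iff₀ hppos).mp h1
      nlinarith
    exact ⟨hppos, hqpos, h1, h2⟩
  -- μ ≠ 0, so C₁ ≤ C₂
  have hμ : μ ≠ 0 := by
    intro h; rw [h] at hqint; simp at hqint
  have hne : (Filter.NeBot (ae μ)) := ae_neBot.mpr hμ
  obtain ⟨z₀, hz₀⟩ := hae.exists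
  have hC₁₂ : C₁ ≤ C₂ := le_trans hz₀.2.2.1 hz₀.2.2.2
  set M' : ℝ := max |Real.log C₁| |Real.log C₂| with hM'
  -- integrability of q * log(q/p)
  have hmeas_log : Measurable fun z => Real.log (q z / p z) :=
    (hq.div hp).log
  have hIK : Integrable (fun z => q z * Real.log (q z / p z)) μ := by
    refine Integrable.mono' (hqInt.const_mul M') ((hq.mul hmeas_log).aestronglyMeasurable) ?_
    filter_upwards [hae] with z ⟨hpz, hqz, h1, h2⟩
    have hlb : Real.log C₁ ≤ Real.log (q z / p z) := Real.log_le_log hC₁ h1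
    have hub : Real.log (q z / p z) ≤ Real.log C₂ :=
      Real.log_le_log (lt_of_lt_of_le hC₁ h1) h2
    have habs : |Real.log (q z / p z)| ≤ M' := abs_le_max_abs_abs hlb hub
    rw [Real.norm_eq_abs, abs_mul, abs_of_pos hqz]
    calc q z * |Real.log (q z / p z)| ≤ q z * M' := by
          exact mul_le_mul_of_nonneg_left habs hqz.le
      _ = M' * q z := mul_comm _ _
  set K : ℝ := ∫ z, q z * Real.log (q z / p z) ∂μ with hK
  -- generic bound for bounded measurable D
  have hub : ∀ (D : Z → ℝ), Measurable D → (∃ M : ℝ, ∀ z, |D z| ≤ M) →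
      (∫ z, D z * q z ∂μ) - (∫ z, Real.exp (D z) * p z ∂μ) ≤ K - 1 := by
    rintro D hD ⟨M, hM⟩
    have hM0 : 0 ≤ M := le_trans (abs_nonneg _) (hM z₀)
    have hI1 : Integrable (fun z => D z * q z) μ := by
      refine Integrable.mono' (hqInt.const_mul M) ((hD.mul hq).aestronglyMeasurable) ?_
      filter_upwards [hq0] with z hz
      rw [Real.norm_eq_abs, abs_mul, abs_of_nonneg hz]
      exact mul_le_mul_of_nonneg_right (hM z) hz
    have hI2 : Integrable (fun z => Real.exp (D z) * p z) μ := by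
      refine Integrable.mono' (hpInt.const_mul (Real.exp M))
        (((Real.measurable_exp.comp hD).mul hp).aestronglyMeasurable) ?_
      filter_upwards [hp0] with z hz
      rw [Real.norm_eq_abs, abs_mul, abs_of_pos (Real.exp_pos _), abs_of_nonneg hz]
      exact mul_le_mul_of_nonneg_right
        (Real.exp_le_exp.mpr ((abs_le.mp (hM z)).2)) hz
    have hmono : (∫ z, (D z * q z - Real.exp (D z) * p z) ∂μ) ≤
        ∫ z, (q z * Real.log (q z / p z) - q z) ∂μ := by
      refine integral_mono_ae (hI1.sub hI2) (hIK.sub hqInt) ?_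
      filter_upwards [hae] with z ⟨hpz, hqz, _, _⟩
      exact fenchel_pt (q z) (p z) (D z) hqz hpz
    rw [integral_sub hI1 hI2, integral_sub hIK hqInt, hqint] at hmono
    exact hmono
  -- the optimal D
  set Ds : Z → ℝ := fun z => Real.log (max C₁ (min C₂ (q z / p z))) with hDs
  have hDsmeas : Measurable Ds :=
    (measurable_const.max (measurable_const.min (hq.div hp))).log
  have hDsbdd : ∀ z, |Ds z| ≤ M' := by
    intro z
    have h1 : C₁ ≤ max C₁ (min C₂ (q z / p z)) := le_max_left _ _
    have h2 : max C₁ (min C₂ (q z / p z)) ≤ C₂ :=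
      max_le hC₁₂ (min_le_left _ _)
    exact abs_le_max_abs_abs (Real.log_le_log hC₁ h1)
      (Real.log_le_log (lt_of_lt_of_le hC₁ h1) h2)
  have hDsae : ∀ᵐ z ∂μ, Ds z = Real.log (q z / p z) := by
    filter_upwards [hae] with z ⟨_, _, h1, h2⟩
    show Real.log (max C₁ (min C₂ (q z / p z))) = _
    rw [min_eq_right h2, max_eq_right h1]
  have hDs1 : (∫ z, Ds z * q z ∂μ) = K := by
    rw [hK]
    refine integral_congr_ae ?_
    filter_upwards [hDsae] with z hz
    rw [hz, mul_comm]
  have hDs2 : (∫ z, Real.exp (Ds z) * p z ∂μ) = 1 := by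
    rw [← hqint]
    refine integral_congr_ae ?_
    filter_upwards [hDsae, hae] with z hz ⟨hpz, hqz, _, _⟩
    rw [hz, Real.exp_log (div_pos hqz hpz), div_mul_cancel₀ _ hpz.ne']
  have hmem : K - 1 ∈ {y : ℝ | ∃ D : Z → ℝ, Measurable D ∧ (∃ M : ℝ, ∀ z, |D z| ≤ M) ∧
        y = ∫ z, D z * q z ∂μ - ∫ z, Real.exp (D z) * p z ∂μ} :=
    ⟨Ds, hDsmeas, ⟨M', hDsbdd⟩, by rw [hDs1, hDs2]⟩
  have hsup : sSup {y : ℝ | ∃ D : Z → ℝ, Measurable D ∧ (∃ M : ℝ, ∀ z, |D z| ≤ M) ∧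
        y = ∫ z, D z * q z ∂μ - ∫ z, Real.exp (D z) * p z ∂μ} = K - 1 := by
    apply le_antisymm
    · apply csSup_le ⟨_, hmem⟩
      rintro y ⟨D, hD, hDb, rfl⟩
      exact hub D hD hDb
    · exact le_csSup ⟨K - 1, by rintro y ⟨D, hD, hDb, rfl⟩; exact hub D hD hDb⟩ hmem
  constructor
  · rw [hsup]; ring
  · have h1 : (∫ z, Real.log (q z / p z) * q z ∂μ) = K := by
      rw [hK]; exact integral_congr_ae (Filter.Eventually.of_forall fun z => mul_comm _ _)
    have h2 : (∫ z, Real.exp (Real.log (q z / p z)) * p z ∂μ) = 1 := by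
      rw [← hqint]
      refine integral_congr_ae ?_
      filter_upwards [hae] with z ⟨hpz, hqz, _, _⟩
      rw [Real.exp_log (div_pos hqz hpz), div_mul_cancel₀ _ hpz.ne']
    rw [h1, h2]
end

section
/- Fenchel conjugate of the Jensen–Shannon generator: Let f(x) = x log x − (x+1) log((1+x)/2) for x > 0. Then for every t < log 2, sup_{x>0} (t x − f(x)) = −log(2 − e^t), and the supremum is attained at x = e^t/(2 − e^t). -/
/-- Fenchel conjugate of the Jensen–Shannon generator
`f(x) = x log x − (x+1) log((1+x)/2)`: for every `t < log 2`,
`sup_{x>0} (t x − f x) = −log(2 − e^t)`, attained at `x = e^t / (2 − e^t)`. -/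
theorem fenchel_conjugate_js_generator
    (f : ℝ → ℝ)
    (hf : ∀ x : ℝ, 0 < x → f x = x * Real.log x - (x + 1) * Real.log ((1 + x) / 2))
    (t : ℝ) (ht : t < Real.log 2) :
    IsGreatest ((fun x : ℝ => t * x - f x) '' Set.Ioi 0)
      (-Real.log (2 - Real.exp t)) ∧
    t * (Real.exp t / (2 - Real.exp t)) - f (Real.exp t / (2 - Real.exp t))
      = -Real.log (2 - Real.exp t) := by
  set s := Real.exp t with hs
  have hs0 : 0 < s := Real.exp_pos t
  have hs2 : s < 2 := by
    have h := Real.exp_lt_exp.mpr ht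
    rwa [Real.exp_log (by norm_num : (0:ℝ) < 2)] at h
  have h2s : 0 < 2 - s := by linarith
  have hts : t = Real.log s := (Real.log_exp t).symm
  -- value at the maximizer
  set x0 : ℝ := s / (2 - s) with hx0def
  have hx0 : 0 < x0 := by positivity
  have hlogx0 : Real.log x0 = t - Real.log (2 - s) := by
    rw [hx0def, Real.log_div (ne_of_gt hs0) (ne_of_gt h2s), hts]
  have hmid : (1 + x0) / 2 = 1 / (2 - s) := by
    rw [hx0def]; field_simp; ring
  have hlogmid : Real.log ((1 + x0) / 2) = -Real.log (2 - s) := by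
    rw [hmid, one_div, Real.log_inv]
  have hval : t * x0 - f x0 = -Real.log (2 - s) := by
    rw [hf x0 hx0, hlogx0, hlogmid]; ring
  -- upper bound
  have key : ∀ x : ℝ, 0 < x → t * x - f x ≤ -Real.log (2 - s) := by
    intro x hx
    rw [hf x hx]
    have hx1 : (0:ℝ) < 1 + x := by linarith
    have e1 : Real.log (s * (1 + x) / (2 * x))
        = t + Real.log ((1 + x) / 2) - Real.log x := by
      rw [Real.log_div (by positivity) (by positivity),
        Real.log_mul (ne_of_gt hs0) (ne_of_gt hx1),
        Real.log_mul (by norm_num : (2:ℝ) ≠ 0) (ne_of_gt hx),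
        Real.log_div (ne_of_gt hx1) (by norm_num : (2:ℝ) ≠ 0), hts]
      ring
    have e2 : Real.log ((2 - s) * (1 + x) / 2)
        = Real.log (2 - s) + Real.log ((1 + x) / 2) := by
      rw [mul_div_assoc, Real.log_mul (ne_of_gt h2s) (by positivity)]
    have h1 : Real.log (s * (1 + x) / (2 * x)) ≤ s * (1 + x) / (2 * x) - 1 :=
      Real.log_le_sub_one_of_pos (by positivity)
    have h3 : Real.log ((2 - s) * (1 + x) / 2) ≤ (2 - s) * (1 + x) / 2 - 1 :=
      Real.log_le_sub_one_of_pos (by positivity)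
    have h4 : x * Real.log (s * (1 + x) / (2 * x))
        ≤ x * (s * (1 + x) / (2 * x) - 1) :=
      mul_le_mul_of_nonneg_left h1 hx.le
    have e1' : x * Real.log (s * (1 + x) / (2 * x))
        = x * t + x * Real.log ((1 + x) / 2) - x * Real.log x := by
      rw [e1]; ring
    have h5 : x * (s * (1 + x) / (2 * x) - 1) + ((2 - s) * (1 + x) / 2 - 1) = 0 := by
      field_simp
      ring
    linarith [h4, h3, e1', e2, h5]
  refine ⟨⟨⟨x0, hx0, hval⟩, ?_⟩, hval⟩
  rintro y ⟨x, hx, rfl⟩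
  exact key x hx
end

section
/- GAN (Jensen–Shannon) variational identity: Let μ be a σ-finite measure on a measurable space Z, and let p, q be probability densities with respect to μ with p(z) > 0 and q(z) > 0 for μ-a.e. z. Let f(x) = x log x − (x+1) log((1+x)/2) for x > 0 and define D_f(q‖p) = ∫ f(q/p) p dμ, assumed finite. Then D_f(q‖p) = sup_D { ∫ (log D) q dμ + ∫ (log(1−D)) p dμ } + log 4, where the supremum is over all measurable functions D : Z → (0,1), and the supremum is attained at D* = q/(p+q). -/
open MeasureTheory

lemma js_ptwise_max (a b d : ℝ) (ha : 0 < a) (hb : 0 < b) (hd0 : 0 < d) (hd1 : d < 1) :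
    Real.log d * b + Real.log (1 - d) * a ≤
      Real.log (b / (a + b)) * b + Real.log (a / (a + b)) * a := by
  have hab : 0 < a + b := by linarith
  have h1 : Real.log (d / (b / (a + b))) ≤ d / (b / (a + b)) - 1 :=
    Real.log_le_sub_one_of_pos (by positivity)
  have hd1' : 0 < 1 - d := by linarith
  have h2 : Real.log ((1 - d) / (a / (a + b))) ≤ (1 - d) / (a / (a + b)) - 1 :=
    Real.log_le_sub_one_of_pos (div_pos hd1' (by positivity))
  rw [Real.log_div (by positivity) (by positivity)] at h1
  rw [Real.log_div hd1'.ne' (by positivity)] at h2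
  have e1 : d / (b / (a + b)) = d * (a + b) / b := by field_simp
  have e2 : (1 - d) / (a / (a + b)) = (1 - d) * (a + b) / a := by field_simp
  rw [e1] at h1; rw [e2] at h2
  have h1' : (Real.log d - Real.log (b / (a + b))) * b ≤ d * (a + b) - b := by
    have := mul_le_mul_of_nonneg_right h1 hb.le
    calc (Real.log d - Real.log (b / (a + b))) * b ≤ (d * (a + b) / b - 1) * b := this
    _ = d * (a + b) - b := by field_simp
  have h2' : (Real.log (1 - d) - Real.log (a / (a + b))) * a ≤ (1 - d) * (a + b) - a := by
    have := mul_le_mul_of_nonneg_right h2 ha.le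
    calc (Real.log (1 - d) - Real.log (a / (a + b))) * a ≤ ((1 - d) * (a + b) / a - 1) * a := this
    _ = (1 - d) * (a + b) - a := by field_simp
  nlinarith

lemma js_identity (a b : ℝ) (ha : 0 < a) (hb : 0 < b) :
    (b / a) * Real.log (b / a) - (b / a + 1) * Real.log ((1 + b / a) / 2) =
      (Real.log (b / (a + b)) * b + Real.log (a / (a + b)) * a + (a + b) * Real.log 2) / a := by
  have hab : 0 < a + b := by linarith
  have e : (1 + b / a) / 2 = (a + b) / (2 * a) := by
    rw [div_eq_div_iff (by norm_num) (by positivity)]; field_simp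
  rw [e, Real.log_div hb.ne' ha.ne', Real.log_div hab.ne' (by positivity),
    Real.log_div hb.ne' hab.ne', Real.log_div ha.ne' hab.ne',
    Real.log_mul (by norm_num) ha.ne']
  field_simp
  ring

lemma js_identity' (a b : ℝ) (ha : 0 < a) (hb : 0 < b) (f : ℝ → ℝ)
    (hf : ∀ x : ℝ, 0 < x → f x = x * Real.log x - (x + 1) * Real.log ((1 + x) / 2)) :
    f (b / a) * a =
      Real.log (b / (a + b)) * b + Real.log (a / (a + b)) * a + (a + b) * Real.log 2 := by
  rw [hf _ (by positivity), js_identity a b ha hb]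
  field_simp


/-- GAN (Jensen–Shannon) variational identity: for positive probability densities `p, q`
w.r.t. a σ-finite `μ` and the Jensen–Shannon generator
`f(x) = x log x − (x+1) log((1+x)/2)` with finite divergence `D_f(q‖p) = ∫ f(q/p) p dμ`,
one has `D_f(q‖p) = sup_D { ∫ log(D) q dμ + ∫ log(1−D) p dμ } + log 4`, the supremum being
over measurable `D : Z → (0,1)` (with both integrals existing), attained at
`D* = q/(p+q)`. -/
theorem js_gan_variational_identity
    {Z : Type} [MeasurableSpace Z] (μ : Measure Z) [SigmaFinite μ]
    (p q : Z → ℝ) (hp : Measurable p) (hq : Measurable q)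
    (hppos : ∀ᵐ z ∂μ, 0 < p z) (hqpos : ∀ᵐ z ∂μ, 0 < q z)
    (hpint : ∫ z, p z ∂μ = 1) (hqint : ∫ z, q z ∂μ = 1)
    (f : ℝ → ℝ)
    (hf : ∀ x : ℝ, 0 < x → f x = x * Real.log x - (x + 1) * Real.log ((1 + x) / 2))
    (hDf : Integrable (fun z => f (q z / p z) * p z) μ) :
    (∫ z, f (q z / p z) * p z ∂μ =
      sSup {y : ℝ | ∃ D : Z → ℝ, Measurable D ∧ (∀ z, D z ∈ Set.Ioo (0 : ℝ) 1) ∧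
        Integrable (fun z => Real.log (D z) * q z) μ ∧
        Integrable (fun z => Real.log (1 - D z) * p z) μ ∧
        y = ∫ z, Real.log (D z) * q z ∂μ + ∫ z, Real.log (1 - D z) * p z ∂μ}
      + Real.log 4) ∧
    (∫ z, Real.log (q z / (p z + q z)) * q z ∂μ
        + ∫ z, Real.log (1 - q z / (p z + q z)) * p z ∂μ
      = ∫ z, f (q z / p z) * p z ∂μ - Real.log 4) := by
    classical
  have hpInt : Integrable p μ := by
    by_contra hcon; rw [integral_undef hcon] at hpint; norm_num at hpint
  have hqInt : Integrable q μ := by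
    by_contra hcon; rw [integral_undef hcon] at hqint; norm_num at hqint
  have hpos : ∀ᵐ z ∂μ, 0 < p z ∧ 0 < q z := hppos.and hqpos
  -- the two pieces of the optimal objective
  set g : Z → ℝ := fun z => Real.log (q z / (p z + q z)) * q z with hgdef
  set h : Z → ℝ := fun z => Real.log (p z / (p z + q z)) * p z with hhdef
  have hgm : Measurable g := ((hq.div (hp.add hq)).log).mul hq
  have hhm : Measurable h := ((hp.div (hp.add hq)).log).mul hp
  have hkey : ∀ᵐ z ∂μ, f (q z / p z) * p z = g z + h z + (p z + q z) * Real.log 2 :=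
    hpos.mono fun z hz => by
      have := js_identity' (p z) (q z) hz.1 hz.2 f hf
      simp only [hgdef, hhdef]; linarith [this]
  have hGHint : Integrable (fun z => g z + h z) μ := by
    have h2 : Integrable (fun z => f (q z / p z) * p z - (p z + q z) * Real.log 2) μ :=
      hDf.sub ((hpInt.add hqInt).mul_const _)
    exact h2.congr (hkey.mono fun z hz => by simp only; linarith [hz])
  have hnonpos : ∀ᵐ z ∂μ, g z ≤ 0 ∧ h z ≤ 0 := by
    refine hpos.mono fun z hz => ?_
    have hab : 0 < p z + q z := by linarith [hz.1, hz.2]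
    constructor
    · exact mul_nonpos_of_nonpos_of_nonneg
        (Real.log_nonpos (div_nonneg hz.2.le hab.le)
          (by rw [div_le_one hab]; linarith [hz.1])) hz.2.le
    · exact mul_nonpos_of_nonpos_of_nonneg
        (Real.log_nonpos (div_nonneg hz.1.le hab.le)
          (by rw [div_le_one hab]; linarith [hz.2])) hz.1.le
  have hgint : Integrable g μ := by
    refine Integrable.mono' hGHint.abs hgm.aestronglyMeasurable ?_
    filter_upwards [hnonpos] with z hz
    rw [Real.norm_eq_abs, abs_of_nonpos hz.1]
    calc -g z ≤ -(g z + h z) := by linarith [hz.2]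
    _ ≤ |g z + h z| := neg_le_abs _
  have hhint : Integrable h μ := by
    refine Integrable.mono' hGHint.abs hhm.aestronglyMeasurable ?_
    filter_upwards [hnonpos] with z hz
    rw [Real.norm_eq_abs, abs_of_nonpos hz.2]
    calc -h z ≤ -(g z + h z) := by linarith [hz.1]
    _ ≤ |g z + h z| := neg_le_abs _
  set M : ℝ := ∫ z, g z ∂μ + ∫ z, h z ∂μ with hMdef
  -- membership of M in the set
  set s : Set Z := {z | 0 < p z ∧ 0 < q z} with hsdef
  have hsm : MeasurableSet s :=
    (measurableSet_lt measurable_const hp).inter (measurableSet_lt measurable_const hq)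
  set D : Z → ℝ := s.piecewise (fun z => q z / (p z + q z)) (fun _ => 1/2) with hDdef
  have hDm : Measurable D :=
    Measurable.piecewise hsm (hq.div (hp.add hq)) measurable_const
  have hDmem : ∀ z, D z ∈ Set.Ioo (0 : ℝ) 1 := by
    intro z
    by_cases hz : z ∈ s
    · have hz' : 0 < p z ∧ 0 < q z := hz
      rw [hDdef, Set.piecewise_eq_of_mem _ _ _ hz]
      have hab : 0 < p z + q z := by linarith [hz'.1, hz'.2]
      exact ⟨div_pos hz'.2 hab, by rw [div_lt_one hab]; linarith [hz'.1]⟩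
    · rw [hDdef, Set.piecewise_eq_of_notMem _ _ _ hz]
      norm_num
  have hsae : ∀ᵐ z ∂μ, z ∈ s := hpos
  have hD1 : (fun z => Real.log (D z) * q z) =ᵐ[μ] g := by
    filter_upwards [hsae] with z hz
    rw [hDdef, Set.piecewise_eq_of_mem _ _ _ hz]
  have hD2 : (fun z => Real.log (1 - D z) * p z) =ᵐ[μ] h := by
    filter_upwards [hsae] with z hz
    have hz' : 0 < p z ∧ 0 < q z := hz
    have hab : p z + q z ≠ 0 := ne_of_gt (by linarith [hz'.1, hz'.2])
    rw [hDdef, Set.piecewise_eq_of_mem _ _ _ hz]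
    have : 1 - q z / (p z + q z) = p z / (p z + q z) := by field_simp; ring
    rw [this]
  have hD1int : Integrable (fun z => Real.log (D z) * q z) μ := hgint.congr hD1.symm
  have hD2int : Integrable (fun z => Real.log (1 - D z) * p z) μ := hhint.congr hD2.symm
  have hMmem : M ∈ {y : ℝ | ∃ D : Z → ℝ, Measurable D ∧ (∀ z, D z ∈ Set.Ioo (0 : ℝ) 1) ∧
      Integrable (fun z => Real.log (D z) * q z) μ ∧
      Integrable (fun z => Real.log (1 - D z) * p z) μ ∧
      y = ∫ z, Real.log (D z) * q z ∂μ + ∫ z, Real.log (1 - D z) * p z ∂μ} := by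
    refine ⟨D, hDm, hDmem, hD1int, hD2int, ?_⟩
    rw [integral_congr_ae hD1, integral_congr_ae hD2]
  -- upper bound
  have hub : ∀ y ∈ {y : ℝ | ∃ D : Z → ℝ, Measurable D ∧ (∀ z, D z ∈ Set.Ioo (0 : ℝ) 1) ∧
      Integrable (fun z => Real.log (D z) * q z) μ ∧
      Integrable (fun z => Real.log (1 - D z) * p z) μ ∧
      y = ∫ z, Real.log (D z) * q z ∂μ + ∫ z, Real.log (1 - D z) * p z ∂μ}, y ≤ M := by
    rintro y ⟨D', hD'm, hD'mem, hA, hB, rfl⟩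
    rw [← integral_add hA hB, hMdef, ← integral_add hgint hhint]
    refine integral_mono_ae (hA.add hB) hGHint ?_
    filter_upwards [hpos] with z hz
    exact js_ptwise_max (p z) (q z) (D' z) hz.1 hz.2 (hD'mem z).1 (hD'mem z).2
  have hSup : sSup {y : ℝ | ∃ D : Z → ℝ, Measurable D ∧ (∀ z, D z ∈ Set.Ioo (0 : ℝ) 1) ∧
      Integrable (fun z => Real.log (D z) * q z) μ ∧
      Integrable (fun z => Real.log (1 - D z) * p z) μ ∧
      y = ∫ z, Real.log (D z) * q z ∂μ + ∫ z, Real.log (1 - D z) * p z ∂μ} = M :=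
    le_antisymm (csSup_le ⟨M, hMmem⟩ hub) (le_csSup ⟨M, hub⟩ hMmem)
  -- compute M
  have hlog4 : Real.log 4 = 2 * Real.log 2 := by
    rw [show (4:ℝ) = 2^2 by norm_num, Real.log_pow]; push_cast; ring
  have hMval : M = ∫ z, f (q z / p z) * p z ∂μ - Real.log 4 := by
    rw [hMdef, ← integral_add hgint hhint]
    have e1 : ∫ z, (g z + h z) ∂μ =
        ∫ z, (f (q z / p z) * p z - (p z + q z) * Real.log 2) ∂μ :=
      integral_congr_ae (hkey.mono fun z hz => by simp only; linarith [hz])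
    have hc : Integrable (fun z => (p z + q z) * Real.log 2) μ :=
      (hpInt.add hqInt).mul_const _
    rw [e1, integral_sub hDf hc, integral_mul_const,
      integral_add hpInt hqInt, hpint, hqint, hlog4]
    ring
  refine ⟨by rw [hSup, hMval]; ring, ?_⟩
  have e2 : ∫ z, Real.log (1 - q z / (p z + q z)) * p z ∂μ = ∫ z, h z ∂μ := by
    refine integral_congr_ae (hpos.mono fun z hz => ?_)
    have hab : p z + q z ≠ 0 := ne_of_gt (by linarith [hz.1, hz.2])
    have h12 : 1 - q z / (p z + q z) = p z / (p z + q z) := by field_simp; ring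
    show Real.log (1 - q z / (p z + q z)) * p z = h z
    rw [h12]
  rw [e2, ← hMval]
end
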